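/- If a strategy profile Λ = (λ_1,...,λ_n) is a doomsday equilibrium in an n-player imperfect-information game, then for every player i, every finite prefix κ of the observation sequence Obs_i(outcome(Λ)) is good for retaliation for player i: there exists an observation-based strategy λ_i^R such that for every finite play π compatible with κ (i.e., Obs_i(π) = κ) and ending in a state of S_i, every play in outcome(π, λ_i^R) belongs to φ_i ∪ ⋂_{j=1}^n (S^ω \ φ_j). -/

import Mathlib

/-- An n-player game arena with imperfect information: `obs i` gives player `i`'s
observation of each state (a function into `O` represents the partition `O_i`). -/
structure IArena (S A O : Type*) (n : ℕ) where
  owner : S → Fin n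
  init : S
  trans : S → A → S
  obs : Fin n → S → O

/-- A finite history: the list of past (state, action) pairs together with the current state. -/
abbrev Hist (S A : Type*) := List (S × A) × S

variable {S A O : Type*} {n : ℕ}

/-- A play `ρ = s₀ σ₀ s₁ σ₁ ⋯`, given by its state and action sequences. -/
def IsPlaySeq (G : IArena S A O n) (ρ : (ℕ → S) × (ℕ → A)) : Prop :=
  ρ.1 0 = G.init ∧ ∀ j : ℕ, ρ.1 (j + 1) = G.trans (ρ.1 j) (ρ.2 j)

/-- The finite history of the play `ρ` up to position `j`. -/
def histAt (ρ : (ℕ → S) × (ℕ → A)) (j : ℕ) : Hist S A :=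
  ((List.range j).map (fun k => (ρ.1 k, ρ.2 k)), ρ.1 j)

/-- Player `i`'s observation of a finite history: states are replaced by observations and
other players' actions are hidden (`none` plays the role of `τ`). -/
def obsPrefix (G : IArena S A O n) (i : Fin n) (h : Hist S A) : List (O × Option A) × O :=
  (h.1.map (fun p => (G.obs i p.1, if G.owner p.1 = i then some p.2 else none)), G.obs i h.2)

/-- Player `i`'s observation sequence of an infinite play. -/
def obsPlay (G : IArena S A O n) (i : Fin n) (ρ : (ℕ → S) × (ℕ → A)) : ℕ → O × Option A :=
  fun j => (G.obs i (ρ.1 j), if G.owner (ρ.1 j) = i then some (ρ.2 j) else none)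

/-- A strategy is observation-based if it agrees on observationally equivalent histories. -/
def ObsBased (G : IArena S A O n) (i : Fin n) (str : Hist S A → A) : Prop :=
  ∀ h1 h2 : Hist S A, obsPrefix G i h1 = obsPrefix G i h2 → str h1 = str h2

/-- The play `ρ` is consistent with the strategy `str` of player `i`. -/
def ConsistentI (G : IArena S A O n) (i : Fin n) (str : Hist S A → A) (ρ : (ℕ → S) × (ℕ → A)) :
    Prop :=
  ∀ j : ℕ, G.owner (ρ.1 j) = i → ρ.2 j = str (histAt ρ j)

/-- The history of the unique play determined by the strategy profile `Λ`. -/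
def outHistI (G : IArena S A O n) (Λ : Fin n → Hist S A → A) : ℕ → Hist S A
  | 0 => ([], G.init)
  | j + 1 =>
    let h := outHistI G Λ j
    let a := Λ (G.owner h.2) h
    (h.1 ++ [(h.2, a)], G.trans h.2 a)

/-- The unique play determined by the strategy profile `Λ`. -/
def outPlayI (G : IArena S A O n) (Λ : Fin n → Hist S A → A) : (ℕ → S) × (ℕ → A) :=
  (fun j => (outHistI G Λ j).2,
   fun j => Λ (G.owner (outHistI G Λ j).2) (outHistI G Λ j))

/-- Doomsday equilibrium for imperfect-information games: an observation-based profile whose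
outcome satisfies every objective, and such that any play consistent with `λ_i` violating
`φ i` violates every objective. -/
def IsDEI (G : IArena S A O n) (φ : Fin n → Set (ℕ → S)) (Λ : Fin n → Hist S A → A) : Prop :=
  (∀ i : Fin n, ObsBased G i (Λ i)) ∧
  (∀ i : Fin n, (outPlayI G Λ).1 ∈ φ i) ∧
  (∀ i : Fin n, ∀ ρ : (ℕ → S) × (ℕ → A), IsPlaySeq G ρ → ConsistentI G i (Λ i) ρ →
    ρ.1 ∉ φ i → ∀ j : Fin n, ρ.1 ∉ φ j)

/-- An observation sequence is doomsday compatible for player `i` if every compatible play is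
winning for `i` or losing for everyone. -/
def DoomsdayCompatible (G : IArena S A O n) (i : Fin n) (φ : Fin n → Set (ℕ → S))
    (η : ℕ → O × Option A) : Prop :=
  ∀ ρ : (ℕ → S) × (ℕ → A), IsPlaySeq G ρ → obsPlay G i ρ = η →
    (ρ.1 ∈ φ i ∨ ∀ j : Fin n, ρ.1 ∉ φ j)

/-- A finite observation prefix `κ` is good for retaliation for player `i`: there is an
observation-based strategy such that from any finite play compatible with `κ` and ending in a
state of player `i`, every continuation consistent with it is winning for `i` or losing for
everyone. -/
def GoodForRetaliation (G : IArena S A O n) (i : Fin n) (φ : Fin n → Set (ℕ → S))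
    (κ : List (O × Option A) × O) : Prop :=
  ∃ str : Hist S A → A, ObsBased G i str ∧
    ∀ π : Hist S A, obsPrefix G i π = κ → G.owner π.2 = i →
      ∀ ρ : (ℕ → S) × (ℕ → A), IsPlaySeq G ρ → histAt ρ π.1.length = π →
        (∀ j : ℕ, π.1.length ≤ j → G.owner (ρ.1 j) = i → ρ.2 j = str (histAt ρ j)) →
        (ρ.1 ∈ φ i ∨ ∀ j : Fin n, ρ.1 ∉ φ j)

lemma histAt_outPlayI (G : IArena S A O n) (Λ : Fin n → Hist S A → A) (j : ℕ) :
    histAt (outPlayI G Λ) j = outHistI G Λ j := by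
  induction j with
  | zero => simp [histAt, outHistI, outPlayI]
  | succ k ih =>
    have h1 : (outHistI G Λ k).1 = (List.range k).map
        (fun l => ((outPlayI G Λ).1 l, (outPlayI G Λ).2 l)) := congrArg Prod.fst ih.symm
    simp only [histAt, outHistI, outPlayI, List.range_succ, List.map_append, List.map_cons,
      List.map_nil]
    exact Prod.ext (by rw [h1]; rfl) rfl

theorem de_prefixes_good_for_retaliation (G : IArena S A O n) (φ : Fin n → Set (ℕ → S))
    (Λ : Fin n → Hist S A → A) (hDE : IsDEI G φ Λ) (i : Fin n) (m : ℕ) :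
    GoodForRetaliation G i φ (obsPrefix G i (histAt (outPlayI G Λ) m)) := by
  obtain ⟨hObs, hWin, hRet⟩ := hDE
  refine ⟨Λ i, hObs i, ?_⟩
  intro π hπobs hπown ρ hρ hhist hfollow
  by_cases hmem : ρ.1 ∈ φ i
  · exact Or.inl hmem
  set out := outPlayI G Λ with hout
  set L := π.1.length with hL
  -- rewrite hπobs in terms of ρ
  rw [← hhist] at hπobs
  -- unpack obsPrefix equality
  have hlist : (List.range L).map (fun k =>
        (G.obs i (ρ.1 k), if G.owner (ρ.1 k) = i then some (ρ.2 k) else none)) =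
      (List.range m).map (fun k =>
        (G.obs i (out.1 k), if G.owner (out.1 k) = i then some (out.2 k) else none)) := by
    have := congrArg Prod.fst hπobs
    simpa [obsPrefix, histAt, List.map_map, Function.comp_def] using this
  have hlast : G.obs i (ρ.1 L) = G.obs i (out.1 m) := by
    have := congrArg Prod.snd hπobs
    simpa [obsPrefix, histAt] using this
  have hLm : L = m := by
    have := congrArg List.length hlist
    simpa using this
  subst hLm
  have hpt : ∀ k, k < L →
      (G.obs i (ρ.1 k), if G.owner (ρ.1 k) = i then some (ρ.2 k) else none) =
      (G.obs i (out.1 k), if G.owner (out.1 k) = i then some (out.2 k) else none) := by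
    intro k hk
    have := congrArg (fun l => l[k]?) hlist
    simpa [List.getElem?_map, List.getElem?_range, hk] using this
  -- ConsistentI G i (Λ i) ρ
  have hcons : ConsistentI G i (Λ i) ρ := by
    intro j hjown
    rcases lt_or_ge j L with hlt | hge
    · have hpk := hpt j hlt
      have hopt := congrArg Prod.snd hpk
      simp only [hjown, if_pos rfl] at hopt
      have howner : G.owner (out.1 j) = i := by
        by_contra hc
        rw [if_neg hc] at hopt
        exact Option.some_ne_none _ hopt
      rw [if_pos howner] at hopt
      have hact : ρ.2 j = out.2 j := Option.some.inj hopt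
      -- out.2 j = Λ i (histAt out j)
      have hout2 : out.2 j = Λ i (histAt out j) := by
        rw [histAt_outPlayI]
        show Λ (G.owner (outHistI G Λ j).2) (outHistI G Λ j) = _
        have : (outHistI G Λ j).2 = out.1 j := rfl
        rw [this, howner]
      -- obs-equivalence of histAt ρ j and histAt out j
      have hobseq : obsPrefix G i (histAt ρ j) = obsPrefix G i (histAt out j) := by
        simp only [obsPrefix, histAt, List.map_map]
        refine Prod.ext ?_ ?_
        · apply List.map_congr_left
          intro k hk
          have hk' : k < j := List.mem_range.mp hk
          exact hpt k (hk'.trans hlt)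
        · exact congrArg Prod.fst (hpt j hlt)
      rw [hact, hout2]
      exact hObs i _ _ hobseq.symm
    · exact hfollow j hge hjown
  exact Or.inr (hRet i ρ hρ hcons hmem)
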